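/- arXiv:2306.13131 — 6 statements merged into one kernel-verified Lean document; each statement's English description precedes it below -/
import Mathlib

section
/- In the chain of diamonds graph with chain length L (L odd), obtained from a path on L vertices by replacing each even-indexed vertex with a doublet (two adjacent vertices each connected to the neighboring path vertices), the maximum independent set is unique and consists exactly of the (L+1)/2 odd-indexed singleton vertices. -/
/-- Vertices of the doublet chain (chain of diamonds) of length `L`:
a pair of a position `p.1 : Fin L` (0-indexed; paper positions are `p.1.val + 1`)
and a label `p.2 : Bool`; the second vertex of a doublet (label `true`) exists only
at 0-indexed odd positions (paper-even positions). -/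
abbrev DVertex (L : ℕ) := {p : Fin L × Bool // p.2 = true → p.1.val % 2 = 1}

/-- The chain-of-diamonds graph: two distinct vertices are adjacent iff their
positions differ by at most one (so doublet partners are adjacent, and all
vertices at consecutive positions are adjacent). -/
def doubletChain (L : ℕ) : SimpleGraph (DVertex L) where
  Adj p q := p ≠ q ∧ p.val.1.val ≤ q.val.1.val + 1 ∧ q.val.1.val ≤ p.val.1.val + 1
  symm := ⟨fun _ _ h => ⟨h.1.symm, h.2.2, h.2.1⟩⟩
  loopless := ⟨fun _ h => h.1 rfl⟩

/-- `S` is an independent set of the graph `G`. -/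
def IsIndepSet {V : Type*} (G : SimpleGraph V) (S : Finset V) : Prop :=
  ∀ a ∈ S, ∀ b ∈ S, ¬ G.Adj a b

/-- The set of singleton vertices at paper-odd (0-indexed even) positions. -/
def MISset (L : ℕ) : Finset (DVertex L) :=
  Finset.univ.filter fun p => p.val.1.val % 2 = 0

lemma indep_far {L : ℕ} {S : Finset (DVertex L)} (hS : IsIndepSet (doubletChain L) S)
    {p q : DVertex L} (hp : p ∈ S) (hq : q ∈ S) (hne : p ≠ q) :
    p.val.1.val + 2 ≤ q.val.1.val ∨ q.val.1.val + 2 ≤ p.val.1.val := by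
  have h := hS p hp q hq
  simp only [doubletChain] at h
  push_neg at h
  have := h hne
  omega

/-- For odd `L`, the chain of diamonds has a unique maximum
independent set, consisting exactly of the `(L+1)/2` paper-odd singleton vertices. -/
theorem doubletChain_unique_MIS (L : ℕ) (hL : Odd L) :
    IsIndepSet (doubletChain L) (MISset L) ∧
    (MISset L).card = (L + 1) / 2 ∧
    (∀ S : Finset (DVertex L), IsIndepSet (doubletChain L) S → S.card ≤ (L + 1) / 2) ∧
    (∀ S : Finset (DVertex L), IsIndepSet (doubletChain L) S → S.card = (L + 1) / 2 →
      S = MISset L) := by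
  obtain ⟨t, ht⟩ := hL
  have hfalse : ∀ p : DVertex L, p.val.1.val % 2 = 0 → p.val.2 = false := by
    intro p hp
    by_contra h
    have := p.property (by simpa using h)
    omega
  -- independence of MISset
  have hindep : IsIndepSet (doubletChain L) (MISset L) := by
    intro a ha b hb hadj
    simp only [MISset, Finset.mem_filter] at ha hb
    obtain ⟨hne, h1, h2⟩ := hadj
    have hab : a.val.1.val = b.val.1.val := by omega
    apply hne
    apply Subtype.ext
    apply Prod.ext
    · exact Fin.ext hab
    · rw [hfalse a ha.2, hfalse b hb.2]
  have hMIScard : (MISset L).card = t + 1 := by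
    apply Finset.card_eq_of_bijective
      (f := fun i hi => (⟨(⟨2 * i, by omega⟩, false), by simp⟩ : DVertex L))
    · intro p hp
      simp only [MISset, Finset.mem_filter] at hp
      have hlt : p.val.1.val / 2 < t + 1 := by
        have := p.val.1.isLt; omega
      refine ⟨p.val.1.val / 2, hlt, ?_⟩
      apply Subtype.ext
      apply Prod.ext
      · exact Fin.ext (by have := hp.2; simp only [Fin.val_mk]; omega)
      · exact (hfalse p hp.2).symm
    · intro i hi
      simp [MISset]
    · intro i j hi hj hij
      have : 2 * i = 2 * j := congrArg (fun p : DVertex L => p.val.1.val) hij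
      omega
  refine ⟨hindep, by omega, ?_, ?_⟩
  · -- bound
    intro S hS
    rw [show (L + 1) / 2 = t + 1 by omega]
    have := Finset.card_le_card_of_injOn (f := fun p : DVertex L => p.val.1.val / 2)
      (t := Finset.range (t + 1))
      (fun p hp => by
        simp only [Finset.coe_range, Set.mem_Iio, Finset.mem_coe, Finset.mem_range]
        show p.val.1.val / 2 < t + 1
        have := p.val.1.isLt; omega)
      (fun p hp q hq h => by
        have h : p.val.1.val / 2 = q.val.1.val / 2 := h
        by_contra hne
        have := indep_far hS hp hq hne
        omega)
    simpa using this
  · -- uniqueness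
    intro S hS hcard
    have hsurj : ∀ k, k < t + 1 → ∃ p ∈ S, p.val.1.val / 2 = k := by
      have himg : S.image (fun p : DVertex L => p.val.1.val / 2) = Finset.range (t + 1) := by
        apply Finset.eq_of_subset_of_card_le
        · intro x hx
          simp only [Finset.mem_image] at hx
          obtain ⟨p, hp, rfl⟩ := hx
          simp only [Finset.mem_range]
          have := p.val.1.isLt; omega
        · rw [Finset.card_range, Finset.card_image_of_injOn, hcard]
          · omega
          · intro p hp q hq h
            have h : p.val.1.val / 2 = q.val.1.val / 2 := h
            by_contra hne
            have := indep_far hS hp hq hne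
            omega
      intro k hk
      have : k ∈ S.image (fun p : DVertex L => p.val.1.val / 2) := by
        rw [himg]; simpa using hk
      simpa using this
    -- all positions are even
    have hchain : ∀ j k, k + j ≤ t → (∃ p ∈ S, p.val.1.val = 2 * k + 1) →
        ∃ p ∈ S, p.val.1.val = 2 * (k + j) + 1 := by
      intro j
      induction j with
      | zero => intro k _ h; simpa using h
      | succ j ih =>
        intro k hk h
        obtain ⟨q, hq, hqv⟩ := ih k (by omega) h
        obtain ⟨r, hr, hrv⟩ := hsurj (k + j + 1) (by omega)
        have hne : r ≠ q := by
          intro h; rw [h] at hrv; omega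
        have := indep_far hS hr hq hne
        exact ⟨r, hr, by omega⟩
    have heven : ∀ p ∈ S, p.val.1.val % 2 = 0 := by
      intro p hp
      by_contra hodd
      set k := p.val.1.val / 2 with hk
      have hpk : p.val.1.val = 2 * k + 1 := by omega
      have hklt : k < t := by have := p.val.1.isLt; omega
      obtain ⟨q, hq, hqv⟩ := hchain (t - k) k (by omega) ⟨p, hp, hpk⟩
      have := q.val.1.isLt
      omega
    have hsub : S ⊆ MISset L := by
      intro p hp
      simp only [MISset, Finset.mem_filter]
      exact ⟨Finset.mem_univ _, heven p hp⟩
    exact Finset.eq_of_subset_of_card_le hsub (by omega)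
end

section
/- In the chain of diamonds graph with odd chain length L, the number of independent sets of size |MIS| - 1 equals 2^{(L+3)/2} - (L+5)/2, and hence the degeneracy ratio D(|MIS|-1)/D(|MIS|) grows exponentially in L. -/
noncomputable def numIndep (L s : ℕ) : ℕ :=
  Set.ncard {S : Finset (DVertex L) | IsIndepSet (doubletChain L) S ∧ S.card = s}

namespace DC

lemma dv_ext {L : ℕ} {p q : DVertex L} (h1 : p.val.1.val = q.val.1.val)
    (h2 : p.val.2 = q.val.2) : p = q := by
  apply Subtype.ext
  exact Prod.ext (Fin.ext h1) h2

lemma adj_iff {L : ℕ} {p q : DVertex L} : (doubletChain L).Adj p q ↔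
    (p ≠ q ∧ p.val.1.val ≤ q.val.1.val + 1 ∧ q.val.1.val ≤ p.val.1.val + 1) := Iff.rfl

def emb {L L' : ℕ} (h : L ≤ L') : DVertex L ↪ DVertex L' where
  toFun p := ⟨(⟨p.val.1.val, lt_of_lt_of_le p.val.1.isLt h⟩, p.val.2), p.property⟩
  inj' := by
    intro p q hpq
    apply dv_ext
    · exact congrArg (fun x => x.val.1.val) hpq
    · exact congrArg (fun x => x.val.2) hpq

@[simp] lemma emb_idx {L L' : ℕ} (h : L ≤ L') (p : DVertex L) :
    ((emb h) p).val.1.val = p.val.1.val := rfl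

@[simp] lemma emb_bool {L L' : ℕ} (h : L ≤ L') (p : DVertex L) :
    ((emb h) p).val.2 = p.val.2 := rfl

lemma adj_emb {L L' : ℕ} (h : L ≤ L') (p q : DVertex L) :
    (doubletChain L').Adj ((emb h) p) ((emb h) q) ↔ (doubletChain L).Adj p q := by
  rw [adj_iff, adj_iff]
  constructor
  · rintro ⟨hne, h1, h2⟩
    exact ⟨fun e => hne (congrArg (emb h) e), h1, h2⟩
  · rintro ⟨hne, h1, h2⟩
    exact ⟨fun e => hne ((emb h).injective e), h1, h2⟩

lemma ncard_restrict (L L' t : ℕ) (h : L ≤ L') :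
    {S : Finset (DVertex L') | IsIndepSet (doubletChain L') S ∧ S.card = t ∧
      ∀ p ∈ S, p.val.1.val < L}.ncard = numIndep L t := by
  rw [numIndep]
  have himg : (fun S : Finset (DVertex L) => S.map (emb h)) ''
      {S | IsIndepSet (doubletChain L) S ∧ S.card = t} =
      {S : Finset (DVertex L') | IsIndepSet (doubletChain L') S ∧ S.card = t ∧
        ∀ p ∈ S, p.val.1.val < L} := by
    ext S
    constructor
    · rintro ⟨T, ⟨hind, hcard⟩, rfl⟩
      refine ⟨?_, by simp [hcard], ?_⟩
      · intro a ha b hb hadj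
        simp only [Finset.mem_map] at ha hb
        obtain ⟨x, hx, rfl⟩ := ha
        obtain ⟨y, hy, rfl⟩ := hb
        exact hind x hx y hy ((adj_emb h x y).mp hadj)
      · intro p hp
        simp only [Finset.mem_map] at hp
        obtain ⟨x, _, rfl⟩ := hp
        exact x.val.1.isLt
    · rintro ⟨hind, hcard, hbd⟩
      set g : {x // x ∈ S} → DVertex L := fun x =>
        (⟨(⟨x.val.val.1.val, hbd x.val x.property⟩, x.val.val.2), x.val.property⟩ : DVertex L)
        with hg
      have hge : ∀ x, emb h (g x) = x.val := fun x => dv_ext rfl rfl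
      have hmap : (S.attach.image g).map (emb h) = S := by
        ext q
        simp only [Finset.mem_map, Finset.mem_image, Finset.mem_attach, true_and]
        constructor
        · rintro ⟨y, ⟨x, rfl⟩, rfl⟩
          rw [hge]; exact x.property
        · intro hq
          exact ⟨g ⟨q, hq⟩, ⟨⟨q, hq⟩, rfl⟩, hge _⟩
      have hginj : Function.Injective g := fun x y hxy =>
        Subtype.ext (by rw [← hge x, ← hge y, hxy])
      refine ⟨S.attach.image g, ⟨?_, ?_⟩, hmap⟩
      · intro a ha b hb hadj
        refine hind (emb h a) ?_ (emb h b) ?_ ((adj_emb h a b).mpr hadj)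
        · rw [← hmap]; exact Finset.mem_map_of_mem _ ha
        · rw [← hmap]; exact Finset.mem_map_of_mem _ hb
      · rw [Finset.card_image_of_injective _ hginj, Finset.card_attach, hcard]
  rw [← himg]
  exact Set.ncard_image_of_injective _ (Finset.map_injective (emb h))

lemma indep_subset {L : ℕ} {S T : Finset (DVertex L)} (h : T ⊆ S)
    (hS : IsIndepSet (doubletChain L) S) : IsIndepSet (doubletChain L) T :=
  fun a ha b hb => hS a (h ha) b (h hb)

lemma ncard_top (L s : ℕ) (v : DVertex (L+2)) (hv : v.val.1.val = L+1) :
    {S : Finset (DVertex (L+2)) | IsIndepSet (doubletChain (L+2)) S ∧ S.card = s+1 ∧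
      v ∈ S}.ncard = numIndep L s := by
  rw [← ncard_restrict L (L+2) s (by omega)]
  have hvnot : ∀ T : Finset (DVertex (L+2)), (∀ p ∈ T, p.val.1.val < L) → v ∉ T := by
    intro T hT hvT
    have := hT v hvT
    omega
  have himg : (fun T : Finset (DVertex (L+2)) => insert v T) ''
      {T | IsIndepSet (doubletChain (L+2)) T ∧ T.card = s ∧ ∀ p ∈ T, p.val.1.val < L} =
      {S | IsIndepSet (doubletChain (L+2)) S ∧ S.card = s+1 ∧ v ∈ S} := by
    ext S
    constructor
    · rintro ⟨T, ⟨hind, hcard, hbd⟩, rfl⟩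
      refine ⟨?_, ?_, Finset.mem_insert_self _ _⟩
      · intro a ha b hb hadj
        rcases Finset.mem_insert.mp ha with rfl | ha'
        · rcases Finset.mem_insert.mp hb with rfl | hb'
          · exact (adj_iff.mp hadj).1 rfl
          · have := hbd b hb'
            obtain ⟨-, h1, h2⟩ := adj_iff.mp hadj
            omega
        · rcases Finset.mem_insert.mp hb with rfl | hb'
          · have := hbd a ha'
            obtain ⟨-, h1, h2⟩ := adj_iff.mp hadj
            omega
          · exact hind a ha' b hb' hadj
      · rw [Finset.card_insert_of_notMem (hvnot T hbd), hcard]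
    · rintro ⟨hind, hcard, hvS⟩
      refine ⟨S.erase v, ⟨indep_subset (Finset.erase_subset _ _) hind, ?_, ?_⟩,
        Finset.insert_erase hvS⟩
      · rw [Finset.card_erase_of_mem hvS, hcard]; rfl
      · intro p hp
        have hpS := Finset.mem_of_mem_erase hp
        have hpv : p ≠ v := Finset.ne_of_mem_erase hp
        have hnadj := hind p hpS v hvS
        simp only [adj_iff, not_and, not_le] at hnadj
        have := hnadj hpv
        have hplt : p.val.1.val < L + 2 := p.val.1.isLt
        omega
  rw [← himg]
  apply Set.ncard_image_of_injOn
  intro T1 h1 T2 h2 heq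
  have e1 := hvnot T1 h1.2.2
  have e2 := hvnot T2 h2.2.2
  have : (insert v T1).erase v = (insert v T2).erase v := by simp only at heq; rw [heq]
  rwa [Finset.erase_insert e1, Finset.erase_insert e2] at this

lemma split_top (L s : ℕ) :
    numIndep (L+2) (s+1) =
      {S : Finset (DVertex (L+2)) | IsIndepSet (doubletChain (L+2)) S ∧ S.card = s+1 ∧
        ∀ p ∈ S, p.val.1.val < L+1}.ncard +
      {S : Finset (DVertex (L+2)) | IsIndepSet (doubletChain (L+2)) S ∧ S.card = s+1 ∧
        ∃ p ∈ S, p.val.1.val = L+1}.ncard := by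
  rw [numIndep]
  rw [← Set.ncard_union_eq ?hdisj (Set.toFinite _) (Set.toFinite _)]
  case hdisj =>
    rw [Set.disjoint_left]
    rintro S ⟨-, -, hbd⟩ ⟨-, -, p, hp, hip⟩
    have := hbd p hp
    omega
  congr 1
  ext S
  simp only [Set.mem_setOf_eq, Set.mem_union]
  constructor
  · rintro ⟨h1, h2⟩
    by_cases hall : ∀ p ∈ S, p.val.1.val < L+1
    · exact Or.inl ⟨h1, h2, hall⟩
    · push_neg at hall
      obtain ⟨p, hp, hip⟩ := hall
      have := p.val.1.isLt
      exact Or.inr ⟨h1, h2, p, hp, by omega⟩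
  · rintro (⟨h1, h2, -⟩ | ⟨h1, h2, -⟩) <;> exact ⟨h1, h2⟩

lemma rec_even (L s : ℕ) (hL : (L+1) % 2 = 0) :
    numIndep (L+2) (s+1) = numIndep (L+1) (s+1) + numIndep L s := by
  rw [split_top, ncard_restrict (L+1) (L+2) (s+1) (by omega)]
  congr 1
  set v : DVertex (L+2) := ⟨(⟨L+1, by omega⟩, false), by simp⟩ with hv
  rw [← ncard_top L s v rfl]
  congr 1
  ext S
  simp only [Set.mem_setOf_eq]
  refine and_congr_right fun h1 => and_congr_right fun _ => ?_
  constructor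
  · rintro ⟨p, hp, hip⟩
    have hb : p.val.2 = false := by
      rcases Bool.eq_false_or_eq_true p.val.2 with h | h
      · have := p.property h
        omega
      · exact h
    have : p = v := dv_ext hip hb
    rwa [← this]
  · intro hvS
    exact ⟨v, hvS, rfl⟩

lemma rec_odd (L s : ℕ) (hL : (L+1) % 2 = 1) :
    numIndep (L+2) (s+1) = numIndep (L+1) (s+1) + 2 * numIndep L s := by
  rw [split_top, ncard_restrict (L+1) (L+2) (s+1) (by omega)]
  congr 1
  set vf : DVertex (L+2) := ⟨(⟨L+1, by omega⟩, false), by simp⟩ with hvf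
  set vt : DVertex (L+2) := ⟨(⟨L+1, by omega⟩, true), fun _ => hL⟩ with hvt
  have hsplit : {S : Finset (DVertex (L+2)) | IsIndepSet (doubletChain (L+2)) S ∧
      S.card = s+1 ∧ ∃ p ∈ S, p.val.1.val = L+1} =
      {S | IsIndepSet (doubletChain (L+2)) S ∧ S.card = s+1 ∧ vf ∈ S} ∪
      {S | IsIndepSet (doubletChain (L+2)) S ∧ S.card = s+1 ∧ vt ∈ S} := by
    ext S
    simp only [Set.mem_setOf_eq, Set.mem_union]
    constructor
    · rintro ⟨h1, h2, p, hp, hip⟩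
      rcases Bool.eq_false_or_eq_true p.val.2 with hb | hb
      · have hpv : p = vt := dv_ext hip hb
        exact Or.inr ⟨h1, h2, hpv ▸ hp⟩
      · have hpv : p = vf := dv_ext hip hb
        exact Or.inl ⟨h1, h2, hpv ▸ hp⟩
    · rintro (⟨h1, h2, hm⟩ | ⟨h1, h2, hm⟩)
      · exact ⟨h1, h2, vf, hm, rfl⟩
      · exact ⟨h1, h2, vt, hm, rfl⟩
  rw [hsplit, Set.ncard_union_eq ?hd (Set.toFinite _) (Set.toFinite _),
    ncard_top L s vf rfl, ncard_top L s vt rfl]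
  · ring
  case hd =>
    rw [Set.disjoint_left]
    rintro S ⟨hind, -, hf⟩ ⟨-, -, ht⟩
    exact hind vf hf vt ht (adj_iff.mpr ⟨by simp [hvf, hvt, Subtype.ext_iff, Prod.ext_iff], Nat.le_succ _, Nat.le_succ _⟩)

lemma numIndep_zero (L : ℕ) : numIndep L 0 = 1 := by
  rw [numIndep]
  have : {S : Finset (DVertex L) | IsIndepSet (doubletChain L) S ∧ S.card = 0} = {∅} := by
    ext S
    simp only [Set.mem_setOf_eq, Set.mem_singleton_iff, Finset.card_eq_zero]
    constructor
    · rintro ⟨-, h⟩; exact h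
    · rintro rfl
      exact ⟨fun a ha => absurd ha (Finset.notMem_empty a), rfl⟩
  rw [this, Set.ncard_singleton]

lemma numIndep_big (L s : ℕ) (h : (L+1)/2 < s) : numIndep L s = 0 := by
  rw [numIndep]
  convert Set.ncard_empty (Finset (DVertex L))
  ext S
  simp only [Set.mem_setOf_eq, Set.mem_empty_iff_false, iff_false, not_and]
  intro hind hcard
  have hinj : Set.InjOn (fun p : DVertex L => p.val.1.val / 2) ↑S := by
    intro p hp q hq hpq
    by_contra hne
    exact hind p hp q hq (adj_iff.mpr ⟨hne, by simp only at hpq; omega, by simp only at hpq; omega⟩)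
  have hsub : S.image (fun p : DVertex L => p.val.1.val / 2) ⊆ Finset.range ((L+1)/2) := by
    intro x hx
    simp only [Finset.mem_image] at hx
    obtain ⟨p, -, rfl⟩ := hx
    have := p.val.1.isLt
    simp only [Finset.mem_range]
    omega
  have := Finset.card_le_card hsub
  rw [Finset.card_image_of_injOn hinj, hcard, Finset.card_range] at this
  omega

lemma numIndep_one_one : numIndep 1 1 = 1 := by
  rw [numIndep]
  set v0 : DVertex 1 := ⟨(⟨0, one_pos⟩, false), by simp⟩ with hv0
  have : {S : Finset (DVertex 1) | IsIndepSet (doubletChain 1) S ∧ S.card = 1} = {{v0}} := by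
    ext S
    simp only [Set.mem_setOf_eq, Set.mem_singleton_iff]
    constructor
    · rintro ⟨-, hcard⟩
      obtain ⟨a, rfl⟩ := Finset.card_eq_one.mp hcard
      congr 1
      have hb : a.val.2 = false := by
        rcases Bool.eq_false_or_eq_true a.val.2 with h | h
        · have := a.property h
          have := a.val.1.isLt
          omega
        · exact h
      have hi : a.val.1.val = 0 := by have := a.val.1.isLt; omega
      exact dv_ext hi hb
    · rintro rfl
      refine ⟨?_, Finset.card_singleton _⟩
      intro a ha b hb hadj
      rw [Finset.mem_singleton] at ha hb
      subst ha; subst hb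
      exact (adj_iff.mp hadj).1 rfl
  rw [this, Set.ncard_singleton]

lemma closed_form (m : ℕ) :
    numIndep (2*m+1) m = 2^(m+2) - (m+3) ∧ numIndep (2*m+1) (m+1) = 1 ∧
    numIndep (2*m) m = 2^(m+1) - 1 := by
  induction m with
  | zero =>
    refine ⟨?_, ?_, ?_⟩
    · simpa using numIndep_zero 1
    · simpa using numIndep_one_one
    · simpa using numIndep_zero 0
  | succ m ih =>
    obtain ⟨ha, hb, hB⟩ := ih
    have hpow : m + 3 ≤ 2^(m+2) := by
      have := Nat.lt_two_pow_self (n := m+2)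
      omega
    have hBnew : numIndep (2*(m+1)) (m+1) = 2^(m+2) - 1 := by
      have e : 2*(m+1) = 2*m+2 := by ring
      rw [e, rec_odd (2*m) m (by omega), hb, hB]
      have h2 : (1:ℕ) ≤ 2^(m+1) := Nat.one_le_two_pow
      have : 2^(m+2) = 2 * 2^(m+1) := by ring
      omega
    have hanew : numIndep (2*(m+1)+1) (m+1) = 2^(m+3) - (m+4) := by
      have e : 2*(m+1)+1 = (2*m+1)+2 := by ring
      rw [e, rec_even (2*m+1) m (by omega), ha]
      have e2 : (2*m+1)+1 = 2*(m+1) := by ring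
      rw [e2, hBnew]
      have h3 : 2^(m+3) = 2 * 2^(m+2) := by ring
      omega
    have hbnew : numIndep (2*(m+1)+1) (m+2) = 1 := by
      have e : 2*(m+1)+1 = (2*m+1)+2 := by ring
      rw [e, rec_even (2*m+1) (m+1) (by omega), hb]
      have e2 : (2*m+1)+1 = 2*(m+1) := by ring
      rw [e2]
      have hz : numIndep (2*(m+1)) (m+2) = 0 := numIndep_big _ _ (by omega)
      rw [hz]
    have e3 : m + 1 + 2 = m + 3 := by ring
    have e4 : m + 1 + 3 = m + 4 := by ring
    rw [e3, e4]
    exact ⟨hanew, hbnew, hBnew⟩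

end DC

/-- For odd `L`, the number of independent sets of size `|MIS| - 1`
(with `|MIS| = (L+1)/2`) equals `2^((L+3)/2) - (L+5)/2`, and hence the degeneracy
ratio `D(|MIS|-1)/D(|MIS|)` grows exponentially in `L`. -/
theorem doubletChain_degeneracy :
    (∀ L : ℕ, Odd L → numIndep L ((L - 1) / 2) = 2 ^ ((L + 3) / 2) - (L + 5) / 2) ∧
    ∃ c : ℝ, 1 < c ∧ ∃ C : ℝ, 0 < C ∧ ∀ L : ℕ, Odd L →
      C * c ^ L ≤ (numIndep L ((L - 1) / 2) : ℝ) / (numIndep L ((L + 1) / 2) : ℝ) := by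
  constructor
  · intro L hL
    obtain ⟨m, rfl⟩ := hL
    have e1 : (2*m+1-1)/2 = m := by omega
    have e2 : (2*m+1+3)/2 = m+2 := by omega
    have e3 : (2*m+1+5)/2 = m+3 := by omega
    rw [e1, e2, e3]
    exact (DC.closed_form m).1
  · have hsq : Real.sqrt 2 ^ 2 = 2 := Real.sq_sqrt (by norm_num)
    have hnn : (0:ℝ) ≤ Real.sqrt 2 := Real.sqrt_nonneg 2
    refine ⟨Real.sqrt 2, by nlinarith, 1/2, by norm_num, ?_⟩
    intro L hL
    obtain ⟨m, rfl⟩ := hL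
    have e1 : (2*m+1-1)/2 = m := by omega
    have e2 : (2*m+1+1)/2 = m+1 := by omega
    rw [e1, e2, (DC.closed_form m).1, (DC.closed_form m).2.1]
    simp only [Nat.cast_one, div_one]
    have hs : Real.sqrt 2 ^ (2*m+1) = 2^m * Real.sqrt 2 := by
      rw [pow_succ, pow_mul, hsq]
    rw [hs]
    have hpow : m + 3 ≤ 2^(m+2) := by
      have := Nat.lt_two_pow_self (n := m+2)
      omega
    have hge : (2:ℕ)^m ≤ 2^(m+2) - (m+3) := by
      have h1 : m < 2^m := Nat.lt_two_pow_self (n := m)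
      have h2 : 2^(m+2) = 4*2^m := by ring
      omega
    have hcast : ((2:ℝ))^m ≤ ((2^(m+2) - (m+3) : ℕ) : ℝ) := by
      calc (2:ℝ)^m = ((2^m : ℕ) : ℝ) := by push_cast; ring
      _ ≤ _ := Nat.cast_le.mpr hge
    have h2 : Real.sqrt 2 ≤ 2 := by nlinarith
    have hp : (0:ℝ) < 2^m := pow_pos (by norm_num) m
    nlinarith
end

section
/- For an independent set S of the doublet chain graph with odd chain length L that has size |MIS|-1 and contains no odd-indexed (singleton) vertex, S must contain exactly one vertex from each of the (L-1)/2 doublets; consequently there are exactly 2^{(L-1)/2} such independent sets. -/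
lemma dc_card_range_filter_odd (L : ℕ) :
    ((Finset.range L).filter (fun i => i % 2 = 1)).card = L / 2 := by
  induction L with
  | zero => simp
  | succ n ih =>
    rw [Finset.range_add_one, Finset.filter_insert]
    by_cases h : n % 2 = 1
    · rw [if_pos h, Finset.card_insert_of_notMem (by simp), ih]; omega
    · rw [if_neg h, ih]; omega

lemma dc_card_odd_fin (L : ℕ) :
    (Finset.univ.filter (fun i : Fin L => i.val % 2 = 1)).card = L / 2 := by
  rw [← dc_card_range_filter_odd L,
    ← Finset.card_image_of_injective _ (Fin.val_injective (n := L))]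
  congr 1
  ext b
  simp only [Finset.mem_image, Finset.mem_filter, Finset.mem_univ, true_and,
    Finset.mem_range]
  constructor
  · rintro ⟨i, hi, rfl⟩; exact ⟨i.isLt, hi⟩
  · rintro ⟨hb, hb2⟩; exact ⟨⟨b, hb⟩, hb2, rfl⟩

lemma dc_fintype_card_odd (L : ℕ) :
    Fintype.card {i : Fin L // i.val % 2 = 1} = L / 2 := by
  rw [Fintype.card_subtype]; exact dc_card_odd_fin L

def mkV (L : ℕ) (i : {i : Fin L // i.val % 2 = 1}) (b : Bool) : DVertex L :=
  ⟨(i.val, b), fun _ => i.property⟩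

-- two vertices at distinct odd positions are not adjacent
lemma dc_not_adj {L : ℕ} {v w : DVertex L} (hv : v.val.1.val % 2 = 1)
    (hw : w.val.1.val % 2 = 1) (hne : v.val.1 ≠ w.val.1) :
    ¬ (doubletChain L).Adj v w := by
  intro ⟨_, h1, h2⟩
  have : v.val.1.val ≠ w.val.1.val := fun h => hne (Fin.ext h)
  omega

-- two distinct vertices at the same position are adjacent
lemma dc_adj_same {L : ℕ} {v w : DVertex L} (hne : v ≠ w) (hpos : v.val.1 = w.val.1) :
    (doubletChain L).Adj v w := by
  refine ⟨hne, ?_, ?_⟩ <;> rw [hpos] <;> omega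

lemma dc_part1 (L : ℕ) (hL : Odd L) (S : Finset (DVertex L))
    (hind : IsIndepSet (doubletChain L) S) (hcard : S.card = (L - 1) / 2)
    (hodd : ∀ v ∈ S, v.val.1.val % 2 = 1) :
    ∀ i : Fin L, i.val % 2 = 1 → ∃! v : DVertex L, v ∈ S ∧ v.val.1 = i := by
  have hinj : ∀ v ∈ S, ∀ w ∈ S, v.val.1 = w.val.1 → v = w := by
    intro v hv w hw h
    by_contra hne
    exact hind v hv w hw (dc_adj_same hne h)
  have hsub : S.image (fun v => v.val.1) ⊆ Finset.univ.filter (fun i : Fin L => i.val % 2 = 1) := by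
    intro i hi
    simp only [Finset.mem_image] at hi
    obtain ⟨v, hv, rfl⟩ := hi
    simp [hodd v hv]
  have hcard2 : (S.image (fun v => v.val.1)).card = (L - 1) / 2 := by
    rw [Finset.card_image_of_injOn (fun v hv w hw h => hinj v hv w hw h), hcard]
  have heq : S.image (fun v => v.val.1) = Finset.univ.filter (fun i : Fin L => i.val % 2 = 1) := by
    apply Finset.eq_of_subset_of_card_le hsub
    rw [hcard2, dc_card_odd_fin]
    obtain ⟨k, hk⟩ := hL
    omega
  intro i hi
  have : i ∈ S.image (fun v => v.val.1) := by rw [heq]; simp [hi]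
  simp only [Finset.mem_image] at this
  obtain ⟨v, hv, hvi⟩ := this
  exact ⟨v, ⟨hv, hvi⟩, fun w ⟨hw, hwi⟩ => hinj w hw v hv (by rw [hwi, hvi])⟩

def dcSet (L : ℕ) (T : Finset {i : Fin L // i.val % 2 = 1}) : Finset (DVertex L) :=
  Finset.univ.image (fun i => mkV L i (decide (i ∈ T)))

lemma mkV_inj {L : ℕ} {i j : {i : Fin L // i.val % 2 = 1}} {b c : Bool}
    (h : mkV L i b = mkV L j c) : i = j ∧ b = c := by
  have h1 := congrArg (fun v : DVertex L => v.val.1) h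
  have h2 := congrArg (fun v : DVertex L => v.val.2) h
  exact ⟨Subtype.ext h1, h2⟩

lemma dcSet_mem_prop (L : ℕ) (hL : Odd L) (T : Finset {i : Fin L // i.val % 2 = 1}) :
    IsIndepSet (doubletChain L) (dcSet L T) ∧ (dcSet L T).card = (L - 1) / 2 ∧
      ∀ v ∈ dcSet L T, v.val.1.val % 2 = 1 := by
  have hodd : ∀ v ∈ dcSet L T, v.val.1.val % 2 = 1 := by
    intro v hv
    simp only [dcSet, Finset.mem_image] at hv
    obtain ⟨i, _, rfl⟩ := hv
    exact i.property
  refine ⟨?_, ?_, hodd⟩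
  · intro a ha b hb hadj
    simp only [dcSet, Finset.mem_image] at ha hb
    obtain ⟨i, _, rfl⟩ := ha
    obtain ⟨j, _, rfl⟩ := hb
    by_cases hij : i = j
    · subst hij; exact hadj.1 rfl
    · exact dc_not_adj i.property j.property
        (fun h => hij (Subtype.ext h)) hadj
  · rw [dcSet, Finset.card_image_of_injective _ (fun i j h => (mkV_inj h).1),
      Finset.card_univ, dc_fintype_card_odd]
    obtain ⟨k, hk⟩ := hL
    omega

lemma dcSet_injective (L : ℕ) : Function.Injective (dcSet L) := by
  intro T T' h
  ext i
  have h1 : mkV L i (decide (i ∈ T)) ∈ dcSet L T' := by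
    rw [← h]; simp only [dcSet, Finset.mem_image]; exact ⟨i, Finset.mem_univ i, rfl⟩
  simp only [dcSet, Finset.mem_image] at h1
  obtain ⟨j, _, hj⟩ := h1
  obtain ⟨rfl, hb⟩ := mkV_inj hj
  rw [decide_eq_decide] at hb
  exact hb.symm

lemma dcSet_range (L : ℕ) (hL : Odd L) :
    {S : Finset (DVertex L) | IsIndepSet (doubletChain L) S ∧
        S.card = (L - 1) / 2 ∧ ∀ v ∈ S, v.val.1.val % 2 = 1} = Set.range (dcSet L) := by
  ext S
  constructor
  · rintro ⟨hind, hcard, hodd⟩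
    have h1 := dc_part1 L hL S hind hcard hodd
    refine ⟨Finset.univ.filter (fun i => mkV L i true ∈ S), ?_⟩
    ext v
    simp only [dcSet, Finset.mem_image]
    constructor
    · rintro ⟨i, _, rfl⟩
      by_cases ht : mkV L i true ∈ S
      · have : decide (i ∈ Finset.univ.filter (fun i => mkV L i true ∈ S)) = true := by
          simp [ht]
        rw [this]; exact ht
      · have hb : decide (i ∈ Finset.univ.filter (fun i => mkV L i true ∈ S)) = false := by
          simp [ht]
        rw [hb]
        obtain ⟨w, ⟨hwS, hwi⟩, _⟩ := h1 i.val i.property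
        rcases hw2 : w.val.2 with _ | _
        · have : w = mkV L i false := by
            apply Subtype.ext
            exact Prod.ext hwi hw2
          rwa [← this]
        · exact absurd (show mkV L i true ∈ S by
            have : w = mkV L i true := Subtype.ext (Prod.ext hwi hw2)
            rwa [← this]) ht
    · intro hv
      have hop := hodd v hv
      refine ⟨⟨v.val.1, hop⟩, Finset.mem_univ _, ?_⟩
      obtain ⟨w, ⟨hwS, hwi⟩, huniq⟩ := h1 v.val.1 hop
      rcases hv2 : v.val.2 with _ | _
      · have ht : mkV L (⟨v.val.1, hop⟩) true ∉ S := by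
          intro hmem
          have e1 := huniq _ ⟨hmem, rfl⟩
          have e2 := huniq _ ⟨hv, rfl⟩
          have : mkV L (⟨v.val.1, hop⟩) true = v := e1.trans e2.symm
          have := congrArg (fun u : DVertex L => u.val.2) this
          simp [mkV, hv2] at this
        have hb : decide ((⟨v.val.1, hop⟩ : {i : Fin L // i.val % 2 = 1}) ∈
            Finset.univ.filter (fun i => mkV L i true ∈ S)) = false := by
          simp [ht]
        rw [hb]
        exact Subtype.ext (Prod.ext_iff.mpr ⟨rfl, hv2.symm⟩)
      · have ht : mkV L (⟨v.val.1, hop⟩) true ∈ S := by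
          have : v = mkV L (⟨v.val.1, hop⟩) true :=
            Subtype.ext (Prod.ext_iff.mpr ⟨rfl, hv2⟩)
          rwa [← this]
        have hb : decide ((⟨v.val.1, hop⟩ : {i : Fin L // i.val % 2 = 1}) ∈
            Finset.univ.filter (fun i => mkV L i true ∈ S)) = true := by
          simp [ht]
        rw [hb]
        exact Subtype.ext (Prod.ext_iff.mpr ⟨rfl, hv2.symm⟩)
  · rintro ⟨T, rfl⟩
    exact dcSet_mem_prop L hL T

/-- For odd `L`, an independent set of the chain of diamonds of size
`|MIS| - 1 = (L-1)/2` containing no singleton (paper-odd-position, i.e. 0-indexed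
even position) vertex contains exactly one vertex from each of the `(L-1)/2`
doublets; consequently there are exactly `2^((L-1)/2)` such independent sets. -/
theorem doubletChain_doublet_choices (L : ℕ) (hL : Odd L) :
    (∀ S : Finset (DVertex L), IsIndepSet (doubletChain L) S → S.card = (L - 1) / 2 →
      (∀ v ∈ S, v.val.1.val % 2 = 1) →
      ∀ i : Fin L, i.val % 2 = 1 → ∃! v : DVertex L, v ∈ S ∧ v.val.1 = i) ∧
    Set.ncard {S : Finset (DVertex L) | IsIndepSet (doubletChain L) S ∧
        S.card = (L - 1) / 2 ∧ ∀ v ∈ S, v.val.1.val % 2 = 1} = 2 ^ ((L - 1) / 2) := by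
  refine ⟨dc_part1 L hL, ?_⟩
  rw [dcSet_range L hL, Set.ncard_eq_toFinset_card', Set.toFinset_range,
    Finset.card_image_of_injective _ (dcSet_injective L), Finset.card_univ,
    Fintype.card_finset, dc_fintype_card_odd]
  obtain ⟨k, hk⟩ := hL
  congr 1
  omega
end

section
/- Define mean-field energies E_Z2(L, delta, Omega) = -(L+1)/4 * (delta + sqrt(4 Omega^2 + delta^2)) and E_Z2bar(L, delta, Omega, k) = -(L-1)/4 * (delta + sqrt(4 k^2 Omega^2 + delta^2)) with k = sqrt(2) and Omega > 0. Then the crossing point delta_crit where E_Z2 = E_Z2bar satisfies delta_crit = Theta(sqrt(L) * Omega) as L tends to infinity; in particular delta_crit / Omega tends to infinity proportionally to sqrt(L). -/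
private lemma mf_bounds (Ω : ℝ) (hΩ : 0 < Ω) (L : ℕ) (hL : 16 ≤ L) (δ : ℝ) (hδ : 0 < δ)
    (heq : ((L : ℝ) + 1) * (δ + Real.sqrt (4 * Ω ^ 2 + δ ^ 2)) =
      ((L : ℝ) - 1) * (δ + Real.sqrt (4 * 2 * Ω ^ 2 + δ ^ 2))) :
    1/6 * Real.sqrt L * Ω ≤ δ ∧ δ ≤ 1 * Real.sqrt L * Ω := by
  have hL16 : (16 : ℝ) ≤ (L : ℝ) := by exact_mod_cast hL
  set a := Real.sqrt (4 * Ω ^ 2 + δ ^ 2) with ha_def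
  set b := Real.sqrt (4 * 2 * Ω ^ 2 + δ ^ 2) with hb_def
  have ha0 : 0 ≤ a := Real.sqrt_nonneg _
  have hb0 : 0 ≤ b := Real.sqrt_nonneg _
  have ha2 : a ^ 2 = 4 * Ω ^ 2 + δ ^ 2 := Real.sq_sqrt (by positivity)
  have hb2 : b ^ 2 = 4 * 2 * Ω ^ 2 + δ ^ 2 := Real.sq_sqrt (by positivity)
  have haδ : δ ≤ a := by nlinarith
  have hbδ : δ ≤ b := by nlinarith
  have h1 : ((L : ℝ) - 1) * (b - a) = 2 * δ + 2 * a := by linear_combination (-1 : ℝ) * heq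
  have hI : 4 * ((L : ℝ) - 1) * Ω ^ 2 = (2 * δ + 2 * a) * (a + b) := by
    linear_combination (a + b) * h1 - ((L : ℝ) - 1) * hb2 + ((L : ℝ) - 1) * ha2
  -- upper bound
  have hup2 : δ ^ 2 ≤ (L : ℝ) * Ω ^ 2 := by nlinarith
  have hsqL : (Real.sqrt L * Ω) ^ 2 = (L : ℝ) * Ω ^ 2 := by
    rw [mul_pow, Real.sq_sqrt (Nat.cast_nonneg L)]
  have hup : δ ≤ Real.sqrt L * Ω := by
    have h := Real.sqrt_le_sqrt (show δ ^ 2 ≤ (Real.sqrt L * Ω) ^ 2 by rw [hsqL]; exact hup2)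
    rwa [Real.sqrt_sq hδ.le, Real.sqrt_sq (by positivity)] at h
  -- lower bound
  have hA : a ≤ 2 * Ω + δ := by nlinarith
  have hB : b ≤ 3 * Ω + δ := by nlinarith
  have hδΩ : Ω < δ := by
    by_contra hc
    push_neg at hc
    nlinarith
  have hlow2 : (L : ℝ) * Ω ^ 2 ≤ 36 * δ ^ 2 := by
    nlinarith [mul_nonneg (by linarith : (0:ℝ) ≤ (L : ℝ) - 16) (sq_nonneg Ω)]
  have hlow : Real.sqrt L * Ω ≤ 6 * δ := by
    have h := Real.sqrt_le_sqrt (show (Real.sqrt L * Ω) ^ 2 ≤ (6 * δ) ^ 2 by rw [hsqL]; nlinarith)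
    rwa [Real.sqrt_sq (by positivity), Real.sqrt_sq (by positivity)] at h
  constructor
  · linarith
  · linarith

private lemma mf_exists (Ω : ℝ) (hΩ : 0 < Ω) (L : ℕ) (hL : 16 ≤ L) :
    ∃ δ : ℝ, 0 < δ ∧
      ((L : ℝ) + 1) * (δ + Real.sqrt (4 * Ω ^ 2 + δ ^ 2)) =
        ((L : ℝ) - 1) * (δ + Real.sqrt (4 * 2 * Ω ^ 2 + δ ^ 2)) := by
  have hL16 : (16 : ℝ) ≤ (L : ℝ) := by exact_mod_cast hL
  set g : ℝ → ℝ := fun x => ((L : ℝ) + 1) * (x + Real.sqrt (4 * Ω ^ 2 + x ^ 2)) -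
    ((L : ℝ) - 1) * (x + Real.sqrt (4 * 2 * Ω ^ 2 + x ^ 2)) with hg_def
  have hcont : Continuous g := by
    apply Continuous.sub <;> apply Continuous.mul continuous_const <;>
      exact Continuous.add continuous_id (Real.continuous_sqrt.comp (continuous_const.add (continuous_pow 2)))
  set b0 := Real.sqrt L * Ω with hb0_def
  have hb0pos : 0 < b0 := by
    apply mul_pos _ hΩ
    exact Real.sqrt_pos.mpr (by linarith)
  have hb0sq : b0 ^ 2 = (L : ℝ) * Ω ^ 2 := by
    rw [hb0_def, mul_pow, Real.sq_sqrt (Nat.cast_nonneg L)]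
  -- g 0 < 0
  have hg0 : g 0 < 0 := by
    have e1 : Real.sqrt (4 * Ω ^ 2 + 0 ^ 2) = 2 * Ω := by
      rw [show 4 * Ω ^ 2 + 0 ^ 2 = (2 * Ω) ^ 2 by ring, Real.sqrt_sq (by positivity)]
    set s := Real.sqrt (4 * 2 * Ω ^ 2 + 0 ^ 2) with hs_def
    have hs0 : 0 ≤ s := Real.sqrt_nonneg _
    have hs2 : s ^ 2 = 8 * Ω ^ 2 := by
      rw [hs_def, Real.sq_sqrt (by positivity)]; ring
    simp only [hg_def, e1]
    have hsq : (((L : ℝ) + 1) * (2 * Ω)) ^ 2 < (((L : ℝ) - 1) * s) ^ 2 := by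
      have h61 : (0:ℝ) < (L:ℝ)^2 - 6*(L:ℝ) + 1 := by nlinarith
      nlinarith [mul_pos h61 (mul_pos hΩ hΩ)]
    have key : ((L : ℝ) + 1) * (2 * Ω) < ((L : ℝ) - 1) * s :=
      lt_of_pow_lt_pow_left₀ 2 (mul_nonneg (by linarith) hs0) hsq
    linarith [key]
  -- g b0 ≥ 0
  have hgb0 : 0 ≤ g b0 := by
    set a' := Real.sqrt (4 * Ω ^ 2 + b0 ^ 2) with ha'_def
    set b' := Real.sqrt (4 * 2 * Ω ^ 2 + b0 ^ 2) with hb'_def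
    have ha'0 : 0 ≤ a' := Real.sqrt_nonneg _
    have hb'0 : 0 ≤ b' := Real.sqrt_nonneg _
    have ha'2 : a' ^ 2 = 4 * Ω ^ 2 + b0 ^ 2 := Real.sq_sqrt (by positivity)
    have hb'2 : b' ^ 2 = 4 * 2 * Ω ^ 2 + b0 ^ 2 := Real.sq_sqrt (by positivity)
    have ha'b : b0 ≤ a' := by nlinarith
    have hb'b : b0 ≤ b' := by nlinarith
    have hsum : 0 < a' + b' := by linarith
    have h2 : ((L : ℝ) - 1) * (4 * Ω ^ 2) ≤ (2 * b0 + 2 * a') * (a' + b') := by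
      nlinarith [mul_le_mul (by linarith : 4 * b0 ≤ 2 * b0 + 2 * a')
        (by linarith : 2 * b0 ≤ a' + b') (by linarith) (by linarith), hb0sq, mul_pos hΩ hΩ]
    have hprod : ((L : ℝ) - 1) * (b' - a') * (a' + b') = ((L : ℝ) - 1) * (4 * Ω ^ 2) := by
      linear_combination ((L : ℝ) - 1) * hb'2 - ((L : ℝ) - 1) * ha'2
    have h3 : ((L : ℝ) - 1) * (b' - a') ≤ 2 * b0 + 2 * a' := by
      refine le_of_mul_le_mul_right ?_ hsum
      rw [hprod]; exact h2
    simp only [hg_def]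
    linarith
  obtain ⟨δ, hδmem, hδeq⟩ := intermediate_value_Icc hb0pos.le hcont.continuousOn
    (Set.mem_Icc.mpr ⟨hg0.le, hgb0⟩)
  refine ⟨δ, ?_, by simpa [hg_def, sub_eq_zero] using hδeq⟩
  rcases lt_or_eq_of_le hδmem.1 with h | h
  · exact h
  · exfalso; rw [← h] at hδeq; rw [hδeq] at hg0; exact lt_irrefl 0 hg0

/-- For the mean-field energies
`E_Z2(L,δ,Ω) = -(L+1)/4 (δ + √(4Ω² + δ²))` and
`E_Z2bar(L,δ,Ω) = -(L-1)/4 (δ + √(4k²Ω² + δ²))` with `k = √2` (so `4k²Ω² = 8Ω²`)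
and `Ω > 0`, the crossing point `δ_crit > 0` where the two energies are equal
exists for all sufficiently large `L` and satisfies `δ_crit = Θ(√L · Ω)`. -/
theorem meanField_crossing (Ω : ℝ) (hΩ : 0 < Ω) :
    ∃ c₁ c₂ : ℝ, 0 < c₁ ∧ 0 < c₂ ∧ ∃ L₀ : ℕ, ∀ L : ℕ, L₀ ≤ L →
      (∃ δ : ℝ, 0 < δ ∧
        -((L : ℝ) + 1) / 4 * (δ + Real.sqrt (4 * Ω ^ 2 + δ ^ 2)) =
          -((L : ℝ) - 1) / 4 * (δ + Real.sqrt (4 * 2 * Ω ^ 2 + δ ^ 2))) ∧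
      ∀ δ : ℝ, 0 < δ →
        -((L : ℝ) + 1) / 4 * (δ + Real.sqrt (4 * Ω ^ 2 + δ ^ 2)) =
          -((L : ℝ) - 1) / 4 * (δ + Real.sqrt (4 * 2 * Ω ^ 2 + δ ^ 2)) →
        c₁ * Real.sqrt L * Ω ≤ δ ∧ δ ≤ c₂ * Real.sqrt L * Ω := by
  refine ⟨1/6, 1, by norm_num, by norm_num, 16, fun L hL => ⟨?_, fun δ hδ heq => ?_⟩⟩
  · obtain ⟨δ, hδ, heq⟩ := mf_exists Ω hΩ L hL
    exact ⟨δ, hδ, by linear_combination (-1/4 : ℝ) * heq⟩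
  · exact mf_bounds Ω hΩ L hL δ hδ (by linear_combination (-4 : ℝ) * heq)
end

section
/- Let M be an m x m real symmetric matrix whose sorted diagonal has largest entry k^2(K-1) and second-largest entry k^2(K-2)+1, where the row containing the largest diagonal entry has exactly two nonzero off-diagonal entries each equal to k, the row of the second-largest diagonal entry has exactly three nonzero off-diagonal entries each equal to k, and all other Gershgorin discs are disjoint from the disc D(k^2(K-1), 2k). If k > (sqrt(29)+5)/2, then the discs D(k^2(K-1), 2k) and D(k^2(K-2)+1, 3k) are disjoint, and hence the largest eigenvalue of M lies in the interval [k^2(K-1) - 2k, k^2(K-1) + 2k]. -/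
open Finset in
private lemma row_abs_sum {m : ℕ} (M : Matrix (Fin m) (Fin m) ℝ) (i : Fin m) (k : ℝ)
    (hk : 0 ≤ k) (c : ℕ)
    (hcard : (Finset.univ.filter fun j => j ≠ i ∧ M i j ≠ 0).card = c)
    (hval : ∀ j, j ≠ i → M i j ≠ 0 → M i j = k) :
    ∑ j ∈ Finset.univ.erase i, |M i j| = c * k := by
  have hsub : (Finset.univ.filter fun j => j ≠ i ∧ M i j ≠ 0) ⊆ Finset.univ.erase i := by
    intro j hj
    simp only [Finset.mem_filter] at hj
    exact Finset.mem_erase.mpr ⟨hj.2.1, Finset.mem_univ j⟩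
  rw [← Finset.sum_subset hsub (by
    intro j hj hj'
    simp only [Finset.mem_filter, Finset.mem_univ, true_and, not_and, not_not] at hj'
    rw [hj' (Finset.mem_erase.mp hj).1, abs_zero])]
  rw [Finset.sum_congr rfl (fun j hj => by
    simp only [Finset.mem_filter] at hj
    rw [hval j hj.2.1 hj.2.2, abs_of_nonneg hk])]
  rw [Finset.sum_const, hcard, nsmul_eq_mul]

private lemma hasEigenvalue_toLin'_eigenvalues {m : ℕ} {M : Matrix (Fin m) (Fin m) ℝ}
    (hM : M.IsHermitian) (i : Fin m) :
    Module.End.HasEigenvalue (Matrix.toLin' M) (hM.eigenvalues i) := by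
  apply Module.End.hasEigenvalue_of_hasEigenvector (x := ⇑(hM.eigenvectorBasis i))
  constructor
  · rw [Module.End.mem_eigenspace_iff, Matrix.toLin'_apply, hM.mulVec_eigenvectorBasis]
  · intro hcontra
    have h1 : ‖hM.eigenvectorBasis i‖ = 1 := hM.eigenvectorBasis.orthonormal.1 i
    have h0 : hM.eigenvectorBasis i = 0 := by
      apply PiLp.ext
      intro j
      exact congrFun hcontra j
    rw [h0, norm_zero] at h1
    exact (one_ne_zero : (1 : ℝ) ≠ 0) h1.symm

private lemma diag_le_max_eigenvalue {m : ℕ} {M : Matrix (Fin m) (Fin m) ℝ}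
    (hM : M.IsHermitian) (i₀ i : Fin m)
    (hmax : ∀ j, hM.eigenvalues j ≤ hM.eigenvalues i) :
    M i₀ i₀ ≤ hM.eigenvalues i := by
  set U : Matrix (Fin m) (Fin m) ℝ := (hM.eigenvectorUnitary : Matrix (Fin m) (Fin m) ℝ) with hU
  have hspec := hM.spectral_theorem
  have h1 : M i₀ i₀ = ∑ j, hM.eigenvalues j * (U i₀ j) ^ 2 := by
    conv_lhs => rw [hspec, Unitary.conjStarAlgAut_apply]
    rw [Matrix.mul_apply]
    refine Finset.sum_congr rfl fun j _ => ?_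
    rw [Matrix.mul_diagonal]
    simp only [Matrix.star_apply, RCLike.star_def, Function.comp_apply, starRingEnd_apply,
      star_trivial, RCLike.ofReal_real_eq_id, id_eq]
    ring
  have h2 : ∑ j, (U i₀ j) ^ 2 = 1 := by
    have := Matrix.mem_unitaryGroup_iff.mp hM.eigenvectorUnitary.2
    have h := congrFun (congrFun this i₀) i₀
    rw [Matrix.mul_apply, Matrix.one_apply_eq] at h
    rw [← h]
    refine Finset.sum_congr rfl fun j _ => ?_
    simp only [Matrix.star_apply, star_trivial]
    ring
  rw [h1]
  calc ∑ j, hM.eigenvalues j * (U i₀ j) ^ 2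
      ≤ ∑ j, hM.eigenvalues i * (U i₀ j) ^ 2 :=
        Finset.sum_le_sum fun j _ => mul_le_mul_of_nonneg_right (hmax j) (sq_nonneg _)
    _ = hM.eigenvalues i := by rw [← Finset.mul_sum, h2, mul_one]

/-- Gershgorin localization of the largest eigenvalue. For a real
symmetric `m × m` matrix whose largest diagonal entry is `k²(K-1)` (at row `i₀`)
and second-largest is `k²(K-2)+1` (at row `i₁`), where row `i₀` has exactly two
nonzero off-diagonal entries each equal to `k`, row `i₁` has exactly three nonzero
off-diagonal entries each equal to `k`, and every other Gershgorin disc is disjoint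
from `D(k²(K-1), 2k)`: if `k > (√29 + 5)/2`, then `D(k²(K-1), 2k)` and
`D(k²(K-2)+1, 3k)` are disjoint, and the largest eigenvalue of `M` lies in
`[k²(K-1) - 2k, k²(K-1) + 2k]`. -/
theorem gershgorin_largest_eigenvalue (m : ℕ) (M : Matrix (Fin m) (Fin m) ℝ)
    (hM : M.IsHermitian) (k K : ℝ) (hk : (Real.sqrt 29 + 5) / 2 < k) (hK : 2 ≤ K)
    (i₀ i₁ : Fin m) (hne : i₀ ≠ i₁)
    (hd₀ : M i₀ i₀ = k ^ 2 * (K - 1)) (hd₁ : M i₁ i₁ = k ^ 2 * (K - 2) + 1)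
    (hdiagmax : ∀ i, M i i ≤ k ^ 2 * (K - 1))
    (hdiag2 : ∀ i, i ≠ i₀ → M i i ≤ k ^ 2 * (K - 2) + 1)
    (hrow₀card : (Finset.univ.filter fun j => j ≠ i₀ ∧ M i₀ j ≠ 0).card = 2)
    (hrow₀val : ∀ j, j ≠ i₀ → M i₀ j ≠ 0 → M i₀ j = k)
    (hrow₁card : (Finset.univ.filter fun j => j ≠ i₁ ∧ M i₁ j ≠ 0).card = 3)
    (hrow₁val : ∀ j, j ≠ i₁ → M i₁ j ≠ 0 → M i₁ j = k)
    (hdisj : ∀ i, i ≠ i₀ → i ≠ i₁ →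
      Disjoint
        (Set.Icc (M i i - ∑ j ∈ Finset.univ.erase i, |M i j|)
          (M i i + ∑ j ∈ Finset.univ.erase i, |M i j|))
        (Set.Icc (k ^ 2 * (K - 1) - 2 * k) (k ^ 2 * (K - 1) + 2 * k))) :
    Disjoint (Set.Icc (k ^ 2 * (K - 1) - 2 * k) (k ^ 2 * (K - 1) + 2 * k))
        (Set.Icc (k ^ 2 * (K - 2) + 1 - 3 * k) (k ^ 2 * (K - 2) + 1 + 3 * k)) ∧
    ∃ i : Fin m, (∀ j, hM.eigenvalues j ≤ hM.eigenvalues i) ∧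
      hM.eigenvalues i ∈ Set.Icc (k ^ 2 * (K - 1) - 2 * k) (k ^ 2 * (K - 1) + 2 * k) := by
  have hs29 : Real.sqrt 29 ^ 2 = 29 := Real.sq_sqrt (by norm_num)
  have hs0 : 0 ≤ Real.sqrt 29 := Real.sqrt_nonneg 29
  have hk0 : 0 < k := by linarith
  have hgap : k ^ 2 * (K - 2) + 1 + 3 * k < k ^ 2 * (K - 1) - 2 * k := by
    have h5 : Real.sqrt 29 < 2 * k - 5 := by linarith
    nlinarith [mul_pos (show (0:ℝ) < 2 * k - 5 - Real.sqrt 29 by linarith)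
      (show (0:ℝ) < 2 * k - 5 + Real.sqrt 29 by linarith)]
  have hdisjIcc : Disjoint (Set.Icc (k ^ 2 * (K - 1) - 2 * k) (k ^ 2 * (K - 1) + 2 * k))
      (Set.Icc (k ^ 2 * (K - 2) + 1 - 3 * k) (k ^ 2 * (K - 2) + 1 + 3 * k)) := by
    rw [Set.disjoint_left]
    rintro x ⟨hx1, hx2⟩ ⟨hy1, hy2⟩
    linarith
  refine ⟨hdisjIcc, ?_⟩
  obtain ⟨i, -, hmax'⟩ := Finset.exists_max_image Finset.univ hM.eigenvalues
    ⟨i₀, Finset.mem_univ i₀⟩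
  have hmax : ∀ j, hM.eigenvalues j ≤ hM.eigenvalues i := fun j => hmax' j (Finset.mem_univ j)
  refine ⟨i, hmax, ?_⟩
  have hμge : k ^ 2 * (K - 1) ≤ hM.eigenvalues i := by
    rw [← hd₀]; exact diag_le_max_eigenvalue hM i₀ i hmax
  obtain ⟨j, hj⟩ := eigenvalue_mem_ball (hasEigenvalue_toLin'_eigenvalues hM i)
  rw [Metric.mem_closedBall, Real.dist_eq] at hj
  simp only [Real.norm_eq_abs] at hj
  obtain ⟨hjl, hjr⟩ := abs_le.mp hj
  rcases eq_or_ne j i₀ with rfl | hj0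
  · rw [row_abs_sum M j k hk0.le 2 hrow₀card hrow₀val, hd₀] at hjl hjr
    exact ⟨by push_cast at hjl ⊢; linarith, by push_cast at hjr ⊢; linarith⟩
  · exfalso
    set R := ∑ l ∈ Finset.univ.erase j, |M j l| with hR
    have hR0 : 0 ≤ R := Finset.sum_nonneg fun l _ => abs_nonneg _
    have hub : M j j + R < k ^ 2 * (K - 1) - 2 * k := by
      rcases eq_or_ne j i₁ with rfl | hj1
      · rw [hR, row_abs_sum M j k hk0.le 3 hrow₁card hrow₁val, hd₁]
        push_cast
        linarith
      · by_contra h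
        push_neg at h
        have hcA : M j j ≤ k ^ 2 * (K - 1) := hdiagmax j
        have hmem1 : max (k ^ 2 * (K - 1) - 2 * k) (M j j - R) ∈
            Set.Icc (M j j - R) (M j j + R) := by
          constructor
          · exact le_max_right _ _
          · exact max_le (by linarith) (by linarith)
        have hmem2 : max (k ^ 2 * (K - 1) - 2 * k) (M j j - R) ∈
            Set.Icc (k ^ 2 * (K - 1) - 2 * k) (k ^ 2 * (K - 1) + 2 * k) := by
          constructor
          · exact le_max_left _ _
          · exact max_le (by linarith) (by linarith)
        exact Set.disjoint_left.mp (hdisj j hj0 hj1) hmem1 hmem2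
    have : hM.eigenvalues i ≤ M j j + R := by linarith
    linarith
end

section
/- Consider the three-level Hamiltonian H on span{|gg>, |gr>, |rg>} with H|gg> = Omega|rg> + k Omega|gr>, H|gr> = k Omega|gg>, H|rg> = Omega|gg> (i.e., matrix entries <gg|H|gr> = k Omega, <gg|H|rg> = Omega, all diagonal entries zero). Then for the initial state |gr>, the time-evolved state exp(-i H t)|gr> has components: amplitude on |gg> equal to (-ik sin(sqrt(1+k^2) Omega t))/sqrt(1+k^2), amplitude on |gr> equal to (1 + k^2 cos(sqrt(1+k^2) Omega t))/(1+k^2), and amplitude on |rg> equal to (-k + k cos(sqrt(1+k^2) Omega t))/(1+k^2). -/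
open Complex

/-- Dimer-model quench dynamics. For the three-level Hamiltonian on
`span{|gg⟩, |gr⟩, |rg⟩}` (basis indices `0, 1, 2`) with couplings
`⟨gg|H|gr⟩ = kΩ`, `⟨gg|H|rg⟩ = Ω` and zero diagonal, the solution of the
Schrödinger equation `ψ' = -i H ψ` with `ψ(0) = |gr⟩` has amplitudes
`ψ_gg(t) = -i k sin(√(1+k²) Ω t)/√(1+k²)`,
`ψ_gr(t) = (1 + k² cos(√(1+k²) Ω t))/(1+k²)` and
`ψ_rg(t) = (-k + k cos(√(1+k²) Ω t))/(1+k²)`. -/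
theorem dimer_quench_dynamics (k Ω : ℝ) :
    let H : Matrix (Fin 3) (Fin 3) ℂ :=
      !![0, ((k * Ω : ℝ) : ℂ), ((Ω : ℝ) : ℂ);
         ((k * Ω : ℝ) : ℂ), 0, 0;
         ((Ω : ℝ) : ℂ), 0, 0]
    let ω : ℝ := Real.sqrt (1 + k ^ 2) * Ω
    let ψ : ℝ → Fin 3 → ℂ := fun t =>
      ![-Complex.I * (k : ℂ) * ((Real.sin (ω * t) : ℝ) : ℂ) / ((Real.sqrt (1 + k ^ 2) : ℝ) : ℂ),
        (1 + (k : ℂ) ^ 2 * ((Real.cos (ω * t) : ℝ) : ℂ)) / (1 + (k : ℂ) ^ 2),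
        (-(k : ℂ) + (k : ℂ) * ((Real.cos (ω * t) : ℝ) : ℂ)) / (1 + (k : ℂ) ^ 2)]
    ψ 0 = ![0, 1, 0] ∧
    ∀ t : ℝ, HasDerivAt ψ (-Complex.I • H.mulVec (ψ t)) t := by
  intro H ω ψ
  have hspos : (0:ℝ) < Real.sqrt (1 + k ^ 2) := Real.sqrt_pos.mpr (by positivity)
  have hs0 : ((Real.sqrt (1 + k ^ 2) : ℝ) : ℂ) ≠ 0 := by
    exact_mod_cast hspos.ne'
  have hsq : ((Real.sqrt (1 + k ^ 2) : ℝ) : ℂ) ^ 2 = 1 + (k:ℂ)^2 := by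
    have h : (Real.sqrt (1 + k ^ 2)) ^ 2 = 1 + k ^ 2 := Real.sq_sqrt (by positivity)
    exact_mod_cast congrArg (Complex.ofReal) h
  have hk20 : (1 + (k:ℂ)^2) ≠ 0 := by
    rw [← hsq]; exact pow_ne_zero _ hs0
  constructor
  · funext i
    fin_cases i <;> simp [ψ, hk20]
  · intro t
    rw [hasDerivAt_pi]
    intro i
    have hlin : HasDerivAt (fun y : ℝ => ω * y) ω t := by
      simpa using (hasDerivAt_id t).const_mul ω
    have hsin : HasDerivAt (fun t : ℝ => ((Real.sin (ω * t) : ℝ) : ℂ))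
        ((ω : ℂ) * ((Real.cos (ω * t) : ℝ) : ℂ)) t := by
      have h1 := ((Real.hasDerivAt_sin (ω * t)).comp t hlin).ofReal_comp
      convert h1 using 1
      · rfl
      simp only [Complex.ofReal_mul]; ring
    have hcos : HasDerivAt (fun t : ℝ => ((Real.cos (ω * t) : ℝ) : ℂ))
        (-((ω : ℂ) * ((Real.sin (ω * t) : ℝ) : ℂ))) t := by
      have h1 := ((Real.hasDerivAt_cos (ω * t)).comp t hlin).ofReal_comp
      convert h1 using 1
      · rfl
      simp only [Complex.ofReal_mul, Complex.ofReal_neg]; ring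
    have hmv : ∀ j, (-Complex.I • H.mulVec (ψ t)) j =
        -Complex.I * (H j 0 * ψ t 0 + H j 1 * ψ t 1 + H j 2 * ψ t 2) := by
      intro j
      simp [Matrix.mulVec, dotProduct, Fin.sum_univ_three, mul_add]
    fin_cases i
    · show HasDerivAt (fun x => ψ x 0) ((-Complex.I • H.mulVec (ψ t)) 0) t
      rw [hmv]
      simp only [ψ, Matrix.cons_val_zero]
      have h := ((hsin.const_mul (-Complex.I * (k:ℂ))).div_const
        ((Real.sqrt (1 + k ^ 2) : ℝ) : ℂ))
      convert h using 1
      · rfl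
      simp only [H, ψ, ω, Matrix.cons_val', Matrix.cons_val_zero, Matrix.cons_val_one,
        Matrix.head_cons, Matrix.cons_val_two, Matrix.tail_cons, Matrix.empty_val',
        Matrix.cons_val_fin_one, Matrix.head_fin_const, Matrix.vecHead, Matrix.vecTail,
        Matrix.of_apply, Function.comp_apply, Matrix.cons_val_succ]
      push_cast
      field_simp
      ring_nf
    · show HasDerivAt (fun x => ψ x 1) ((-Complex.I • H.mulVec (ψ t)) 1) t
      rw [hmv]
      simp only [ψ, Matrix.cons_val_one, Matrix.head_cons]
      have h := ((hcos.const_mul ((k:ℂ)^2)).const_add 1).div_const (1 + (k:ℂ)^2)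
      convert h using 1
      · rfl
      · rfl
      simp only [H, ψ, ω, Matrix.cons_val', Matrix.cons_val_zero, Matrix.cons_val_one,
        Matrix.head_cons, Matrix.cons_val_two, Matrix.tail_cons, Matrix.empty_val',
        Matrix.cons_val_fin_one, Matrix.head_fin_const, Matrix.vecHead, Matrix.vecTail,
        Matrix.of_apply, Function.comp_apply, Matrix.cons_val_succ]
      push_cast
      field_simp
      ring_nf
      rw [Complex.I_sq, hsq]; ring
    · show HasDerivAt (fun x => ψ x 2) ((-Complex.I • H.mulVec (ψ t)) 2) t
      rw [hmv]
      simp only [ψ, Matrix.cons_val_two, Matrix.tail_cons, Matrix.head_cons]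
      have h := ((hcos.const_mul ((k:ℂ))).const_add (-(k:ℂ))).div_const (1 + (k:ℂ)^2)
      convert h using 1
      · rfl
      simp [H, ψ, ω, Matrix.vecHead, Matrix.vecTail]
      push_cast
      field_simp
      ring_nf
      rw [Complex.I_sq, hsq]; ring
end
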